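/- Let K ⊆ 𝕋 be compact, l ∈ (0,1), k = π/l + 1, and 0 < t < 1/k. Then for every λ in the connected component Ω_{kt}(K) containing 0 of the set {w ∈ 𝔻 : ρ_K(w) > kt}, the harmonic measure satisfies ω(λ, K_t; 𝔻) ≤ (l/t)·(1 − |λ|). -/

import Mathlib

open MeasureTheory Set

noncomputable def hMeasure (lam : ℂ) (A : Set ℂ) : ℝ :=
  (1 / (2 * Real.pi)) * ∫ θ in (0:ℝ)..(2 * Real.pi),
    Set.indicator A (fun _ => (1:ℝ)) (Complex.exp (θ * Complex.I)) *
      ((1 - ‖lam‖ ^ 2) / ‖Complex.exp (θ * Complex.I) - lam‖ ^ 2)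

set_option maxHeartbeats 2000000 in
theorem stmt5 (K : Set ℂ) (hK : IsCompact K) (hKT : K ⊆ Metric.sphere (0:ℂ) 1)
    (l : ℝ) (hl0 : 0 < l) (hl1 : l < 1)
    (t : ℝ) (ht0 : 0 < t) (htk : t < 1 / (Real.pi / l + 1))
    (lam : ℂ)
    (hlam : lam ∈ connectedComponentIn
      {w ∈ Metric.ball (0:ℂ) 1 | (Real.pi / l + 1) * t < Metric.infDist w K} 0) :
    hMeasure lam {ζ ∈ Metric.sphere (0:ℂ) 1 | Metric.infDist ζ K ≤ t} ≤
      (l / t) * (1 - ‖lam‖) := by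
  have hπ : (0:ℝ) < Real.pi := Real.pi_pos
  have hπ3 : (3.141592:ℝ) < Real.pi := Real.pi_gt_d6
  set A : Set ℂ := {ζ ∈ Metric.sphere (0:ℂ) 1 | Metric.infDist ζ K ≤ t} with hA
  set r : ℝ := ‖lam‖ with hrdef
  have hmem : lam ∈ {w ∈ Metric.ball (0:ℂ) 1 | (Real.pi / l + 1) * t < Metric.infDist w K} :=
    connectedComponentIn_subset _ _ hlam
  obtain ⟨hball, hfar⟩ := hmem
  have hr1 : r < 1 := by
    have := Metric.mem_ball.mp hball
    simpa [Complex.dist_eq, hrdef] using this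
  have hr0 : 0 ≤ r := norm_nonneg lam
  -- l/t is large
  have hlt : (Real.pi + l) * t < l := by
    have h1 : 0 < Real.pi / l + 1 := by positivity
    have := (lt_div_iff₀ h1).mp htk  -- t * (π/l+1) < 1
    have h2 := mul_lt_mul_of_pos_left this hl0
    calc (Real.pi + l) * t = l * (t * (Real.pi / l + 1)) := by field_simp
    _ < l * 1 := h2
    _ = l := mul_one l
  -- K nonempty
  have hπt : Real.pi * t < l := by nlinarith [mul_pos hl0 ht0]
  have hne : K.Nonempty := by
    rcases K.eq_empty_or_nonempty with h | h
    · exfalso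
      rw [h, Metric.infDist_empty] at hfar
      nlinarith [mul_pos (by positivity : (0:ℝ) < Real.pi / l + 1) ht0]
    · exact h
  -- points of A are far from lam
  have hA_far : ∀ ζ ∈ A, (Real.pi / l) * t ≤ ‖ζ - lam‖ := by
    intro ζ hζ
    obtain ⟨-, hζt⟩ := hζ
    obtain ⟨x, hxK, hxd⟩ := hK.exists_infDist_eq_dist hne ζ
    have h1 : (Real.pi / l + 1) * t < dist lam x := lt_of_lt_of_le hfar (Metric.infDist_le_dist_of_mem hxK)
    have h2 : dist lam x ≤ dist lam ζ + dist ζ x := dist_triangle lam ζ x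
    have h3 : dist ζ x ≤ t := by rw [← hxd]; exact hζt
    have : (Real.pi / l) * t ≤ dist lam ζ := by nlinarith
    calc (Real.pi / l) * t ≤ dist lam ζ := this
    _ = ‖ζ - lam‖ := by rw [Complex.dist_eq, norm_sub_rev]
  -- lower bound on |e^{iθ} - lam|
  have hlow : ∀ θ : ℝ, 1 - r ≤ ‖Complex.exp (θ * Complex.I) - lam‖ := by
    intro θ
    have h1 : ‖Complex.exp ((θ:ℂ) * Complex.I)‖ = 1 := Complex.norm_exp_ofReal_mul_I θ
    have h2 := norm_sub_norm_le (Complex.exp ((θ:ℂ) * Complex.I)) lam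
    rw [h1] at h2
    exact h2
  set F : ℝ → ℝ := fun θ =>
    Set.indicator A (fun _ => (1:ℝ)) (Complex.exp (θ * Complex.I)) *
      ((1 - r ^ 2) / ‖Complex.exp (θ * Complex.I) - lam‖ ^ 2) with hF
  have hr2 : (0:ℝ) ≤ 1 - r ^ 2 := by nlinarith
  have habs_pos : ∀ θ : ℝ, 0 < ‖Complex.exp (θ * Complex.I) - lam‖ := fun θ =>
    lt_of_lt_of_le (by linarith) (hlow θ)
  have hF0 : ∀ θ, 0 ≤ F θ := by
    intro θ
    apply mul_nonneg
    · exact Set.indicator_nonneg (fun _ _ => zero_le_one) _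
    · positivity
  have hker_le : ∀ θ : ℝ,
      (1 - r ^ 2) / ‖Complex.exp (θ * Complex.I) - lam‖ ^ 2 ≤ (1 - r ^ 2) / (1 - r) ^ 2 := by
    intro θ
    apply div_le_div_of_nonneg_left hr2 (by nlinarith)
    exact pow_le_pow_left₀ (by linarith) (hlow θ) 2
  have hFle : ∀ θ, F θ ≤ (1 - r ^ 2) / (1 - r) ^ 2 := by
    intro θ
    by_cases hmem : Complex.exp ((θ:ℂ) * Complex.I) ∈ A
    · rw [hF]; simp only [Set.indicator_of_mem hmem, one_mul]
      exact hker_le θ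
    · rw [hF]; simp only [Set.indicator_of_notMem hmem, zero_mul]
      positivity
  have hAmeas : MeasurableSet A := by
    have : IsClosed A := by
      apply IsClosed.inter Metric.isClosed_sphere
      exact isClosed_le (Metric.continuous_infDist_pt K) continuous_const
    exact this.measurableSet
  have hFmeas : Measurable F := by
    apply Measurable.mul
    · exact (measurable_const.indicator hAmeas).comp
        (Complex.continuous_exp.comp (Complex.continuous_ofReal.mul continuous_const)).measurable
    · apply Measurable.div measurable_const
      exact ((continuous_norm.comp ((Complex.continuous_exp.comp
        (Complex.continuous_ofReal.mul continuous_const)).sub continuous_const)).pow 2).measurable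
  have hFint : ∀ a b : ℝ, IntervalIntegrable F volume a b := by
    intro a b
    rw [intervalIntegrable_iff]
    apply Measure.integrableOn_of_bounded measure_Ioc_lt_top.ne
      hFmeas.aestronglyMeasurable (M := (1 - r ^ 2) / (1 - r) ^ 2)
    filter_upwards with θ
    rw [Real.norm_eq_abs, abs_of_nonneg (hF0 θ)]
    exact hFle θ
  have hgoal : hMeasure lam A = (1 / (2 * Real.pi)) * ∫ θ in (0:ℝ)..(2 * Real.pi), F θ := rfl
  have hlt2 : Real.pi + l < l / t := by rw [lt_div_iff₀ ht0]; linarith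
  rcases le_or_gt r (1/3) with hcase | hcase
  · -- easy case : lam near the origin
    have hI : (∫ θ in (0:ℝ)..(2*Real.pi), F θ) ≤ 2 * Real.pi * ((1 - r ^ 2) / (1 - r) ^ 2) := by
      calc (∫ θ in (0:ℝ)..(2*Real.pi), F θ)
          ≤ ∫ _ in (0:ℝ)..(2*Real.pi), ((1 - r ^ 2) / (1 - r) ^ 2) := by
            apply intervalIntegral.integral_mono_on (by positivity) (hFint _ _)
              intervalIntegrable_const (fun θ _ => hFle θ)
        _ = 2 * Real.pi * ((1 - r ^ 2) / (1 - r) ^ 2) := by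
            rw [intervalIntegral.integral_const, smul_eq_mul]; ring
    rw [hgoal]
    have h2 : (1 / (2*Real.pi)) * (∫ θ in (0:ℝ)..(2*Real.pi), F θ)
        ≤ (1 - r ^ 2) / (1 - r) ^ 2 := by
      have := mul_le_mul_of_nonneg_left hI (by positivity : (0:ℝ) ≤ 1 / (2*Real.pi))
      calc (1 / (2*Real.pi)) * (∫ θ in (0:ℝ)..(2*Real.pi), F θ)
          ≤ (1 / (2*Real.pi)) * (2 * Real.pi * ((1 - r ^ 2) / (1 - r) ^ 2)) := this
        _ = (1 - r ^ 2) / (1 - r) ^ 2 := by field_simp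
    refine h2.trans ?_
    have hc : (1 - r ^ 2) / (1 - r) ^ 2 = (1 + r) / (1 - r) := by
      rw [div_eq_div_iff (by nlinarith) (by linarith)]; ring
    rw [hc]
    have h3 : (1 + r) / (1 - r) ≤ 2 := by
      rw [div_le_iff₀ (by linarith)]; linarith
    refine h3.trans ?_
    nlinarith [mul_lt_mul_of_pos_right hlt2 (by linarith : (0:ℝ) < 1 - r)]
  · -- main case : r > 1/3
    have hr_pos : (0:ℝ) < r := by linarith
    set s : ℝ := Real.sqrt r with hsdef
    have hs2 : s ^ 2 = r := Real.sq_sqrt hr0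
    have hs0 : 0 < s := Real.sqrt_pos.mpr hr_pos
    have hs1 : s ≤ 1 := by nlinarith
    have hshalf : 1/2 < s := by nlinarith
    set φ : ℝ := Complex.arg lam with hφdef
    set u₀ : ℝ := Real.pi ^ 2 * t / (2 * l * s) with hu₀def
    set C : ℝ := (1 - r ^ 2) * (Real.pi ^ 2 / (4 * s ^ 2)) with hCdef
    set M : ℝ := (1 - r ^ 2) * (l ^ 2 / (Real.pi ^ 2 * t ^ 2)) with hMdef
    have h2ls : (0:ℝ) < 2 * l * s := mul_pos (mul_pos two_pos hl0) hs0
    have hu0pos : 0 < u₀ := by rw [hu₀def]; exact div_pos (by positivity) h2ls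
    have hu0π : u₀ ≤ Real.pi := by
      rw [hu₀def, div_le_iff₀ h2ls]
      nlinarith [mul_lt_mul_of_pos_left hπt hπ,
        mul_nonneg (mul_nonneg hπ.le hl0.le) (by linarith : (0:ℝ) ≤ 2*s - 1)]
    have hC0 : 0 ≤ C := by
      rw [hCdef]; exact mul_nonneg hr2 (div_nonneg (sq_nonneg _) (by positivity))
    have hM0 : 0 ≤ M := by
      rw [hMdef]
      exact mul_nonneg hr2 (div_nonneg (sq_nonneg _)
        (mul_nonneg (sq_nonneg _) (sq_nonneg _)))
    -- pointwise bound from the distance to K_t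
    have hFb : ∀ θ : ℝ, F θ ≤ M := by
      intro θ
      by_cases hm : Complex.exp ((θ:ℂ) * Complex.I) ∈ A
      · rw [hF]; simp only [Set.indicator_of_mem hm, one_mul]
        have ha := hA_far _ hm
        have ha0 : (0:ℝ) < Real.pi / l * t := by positivity
        calc (1 - r ^ 2) / ‖Complex.exp (↑θ * Complex.I) - lam‖ ^ 2
            ≤ (1 - r ^ 2) / (Real.pi / l * t) ^ 2 := by
              apply div_le_div_of_nonneg_left hr2 (by positivity)
              exact pow_le_pow_left₀ ha0.le ha 2
          _ = M := by
              rw [hMdef, mul_pow, div_pow, div_mul_eq_mul_div, div_div_eq_mul_div, ← mul_div_assoc]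
      · rw [hF]; simp only [Set.indicator_of_notMem hm, zero_mul]; exact hM0
    -- the square of the distance to the circle point at angle u + φ
    have hns : ∀ u : ℝ, ‖Complex.exp ((↑(u + φ)) * Complex.I) - lam‖ ^ 2
        = 1 - 2 * r * Real.cos u + r ^ 2 := by
      intro u
      have hre : lam.re = r * Real.cos φ := (Complex.norm_mul_cos_arg lam).symm
      have him : lam.im = r * Real.sin φ := (Complex.norm_mul_sin_arg lam).symm
      rw [Complex.sq_norm, Complex.normSq_apply, Complex.sub_re, Complex.sub_im,
        Complex.exp_ofReal_mul_I_re, Complex.exp_ofReal_mul_I_im, hre, him,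
        Real.cos_add, Real.sin_add]
      linear_combination (Real.cos φ ^ 2 + Real.sin φ ^ 2) * Real.sin_sq_add_cos_sq u +
        (1 + r ^ 2 - 2 * r * Real.cos u) * Real.sin_sq_add_cos_sq φ
    -- tail bound
    have htail : ∀ u : ℝ, -Real.pi ≤ u → u ≤ Real.pi → u₀ ≤ |u| → F (u + φ) ≤ C / u ^ 2 := by
      intro u hu1 hu2 hu3
      have hu0 : u ≠ 0 := by
        intro h; rw [h, abs_zero] at hu3; linarith
      have husq : 0 < u ^ 2 := by positivity
      have hcos : Real.cos u ≤ 1 - 2 / Real.pi ^ 2 * u ^ 2 :=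
        Real.cos_le_one_sub_mul_cos_sq (abs_le.mpr ⟨hu1, hu2⟩)
      have hlb : 4 * r / Real.pi ^ 2 * u ^ 2 ≤ 1 - 2 * r * Real.cos u + r ^ 2 := by
        have h2 := mul_le_mul_of_nonneg_left hcos (by linarith : (0:ℝ) ≤ 2 * r)
        ring_nf at h2 ⊢
        nlinarith [sq_nonneg (1 - r), h2]
      have hFk : F (u + φ) ≤ (1 - r ^ 2) /
          ‖Complex.exp ((↑(u + φ)) * Complex.I) - lam‖ ^ 2 := by
        by_cases hm : Complex.exp ((↑(u + φ):ℂ) * Complex.I) ∈ A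
        · rw [hF]; simp only [Set.indicator_of_mem hm, one_mul]; exact le_rfl
        · rw [hF]; simp only [Set.indicator_of_notMem hm, zero_mul]
          exact div_nonneg hr2 (sq_nonneg _)
      refine hFk.trans ?_
      rw [hns u]
      calc (1 - r ^ 2) / (1 - 2 * r * Real.cos u + r ^ 2)
          ≤ (1 - r ^ 2) / (4 * r / Real.pi ^ 2 * u ^ 2) := by
            apply div_le_div_of_nonneg_left hr2 (by positivity) hlb
        _ = C / u ^ 2 := by
            rw [hCdef, ← hs2]; field_simp
    -- integrability of the shifted function
    set Fs : ℝ → ℝ := fun u => F (u + φ) with hFsdef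
    have hFsint : ∀ a b : ℝ, IntervalIntegrable Fs volume a b := by
      intro a b
      have := (hFint (a + φ) (b + φ)).comp_add_right φ
      simpa using this
    -- periodic shift of the integral
    have hper : Function.Periodic F (2 * Real.pi) := by
      intro θ
      have h2 : Complex.exp (↑(θ + 2*Real.pi) * Complex.I) = Complex.exp (↑θ * Complex.I) := by
        push_cast
        rw [add_mul, Complex.exp_add, Complex.exp_two_pi_mul_I, mul_one]
      simp only [hF, h2]
    have hshift : (∫ θ in (0:ℝ)..(2*Real.pi), F θ) = ∫ u in (-Real.pi)..(Real.pi), Fs u := by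
      have h1 := hper.intervalIntegral_add_eq 0 (φ - Real.pi)
      rw [zero_add] at h1
      have h2 : φ - Real.pi + 2*Real.pi = φ + Real.pi := by ring
      rw [h2] at h1
      have h3 := intervalIntegral.integral_comp_add_right (a := -Real.pi) (b := Real.pi) F φ
      have h4 : -Real.pi + φ = φ - Real.pi := by ring
      have h5 : Real.pi + φ = φ + Real.pi := by ring
      rw [h4, h5] at h3
      rw [h1, ← h3]
    -- splitting the integral
    have hsplit : (∫ u in (-Real.pi)..(Real.pi), Fs u)
        = (∫ u in (-Real.pi)..(-u₀), Fs u) + ((∫ u in (-u₀)..u₀, Fs u) + ∫ u in u₀..Real.pi, Fs u) := by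
      rw [intervalIntegral.integral_add_adjacent_intervals (hFsint (-u₀) u₀) (hFsint u₀ Real.pi),
        intervalIntegral.integral_add_adjacent_intervals (hFsint (-Real.pi) (-u₀)) (hFsint (-u₀) Real.pi)]
    -- middle piece
    have hmid : (∫ u in (-u₀)..u₀, Fs u) ≤ 2 * u₀ * M := by
      calc (∫ u in (-u₀)..u₀, Fs u) ≤ ∫ _ in (-u₀)..u₀, M :=
            intervalIntegral.integral_mono_on (by linarith) (hFsint _ _)
              intervalIntegrable_const (fun u _ => hFb (u + φ))
        _ = 2 * u₀ * M := by rw [intervalIntegral.integral_const, smul_eq_mul]; ring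
    -- the explicit integral of C/u^2
    have hCunz : ∀ a b : ℝ, (0:ℝ) ∉ Set.uIcc a b → (∫ u in a..b, C / u ^ 2) = C * (a⁻¹ - b⁻¹) := by
      intro a b h0
      have hz : (∫ u in a..b, (u:ℝ) ^ (-2:ℤ)) = (b ^ (-1:ℤ) - a ^ (-1:ℤ)) / ((-2:ℤ) + 1) := by
        have := integral_zpow (a := a) (b := b) (n := (-2:ℤ)) (Or.inr ⟨by norm_num, h0⟩)
        simpa using this
      have heq : (∫ u in a..b, C / u ^ 2) = C * ∫ u in a..b, (u:ℝ) ^ (-2:ℤ) := by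
        rw [← intervalIntegral.integral_const_mul]
        apply intervalIntegral.integral_congr
        intro u _
        show C / u ^ 2 = C * u ^ (-2:ℤ)
        rw [zpow_neg, div_eq_mul_inv, ← zpow_natCast u 2]
        norm_num
      rw [heq, hz]
      push_cast
      have ha : a ≠ 0 := by intro h; apply h0; rw [← h]; exact Set.left_mem_uIcc
      have hb : b ≠ 0 := by intro h; apply h0; rw [← h]; exact Set.right_mem_uIcc
      field_simp
      ring
    have hint2 : ∀ a b : ℝ, (0:ℝ) ∉ Set.uIcc a b →
        IntervalIntegrable (fun u => C / u ^ 2) volume a b := by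
      intro a b h0
      apply ContinuousOn.intervalIntegrable
      apply ContinuousOn.div continuousOn_const (Continuous.continuousOn (by continuity))
      intro x hx
      have : x ≠ 0 := fun h => h0 (h ▸ hx)
      positivity
    have h0r : (0:ℝ) ∉ Set.uIcc u₀ Real.pi := by
      rw [Set.uIcc_of_le hu0π]
      intro h; exact absurd h.1 (by linarith)
    have h0l : (0:ℝ) ∉ Set.uIcc (-Real.pi) (-u₀) := by
      rw [Set.uIcc_of_le (by linarith)]
      intro h; exact absurd h.2 (by linarith)
    -- right piece
    have hright : (∫ u in u₀..Real.pi, Fs u) ≤ C * (u₀⁻¹ - Real.pi⁻¹) := by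
      calc (∫ u in u₀..Real.pi, Fs u) ≤ ∫ u in u₀..Real.pi, C / u ^ 2 := by
            apply intervalIntegral.integral_mono_on hu0π (hFsint _ _) (hint2 _ _ h0r)
            intro u hu
            exact htail u (by linarith [hu.1]) hu.2 (by rw [abs_of_nonneg (by linarith [hu.1])]; exact hu.1)
        _ = C * (u₀⁻¹ - Real.pi⁻¹) := hCunz _ _ h0r
    -- left piece
    have hleft : (∫ u in (-Real.pi)..(-u₀), Fs u) ≤ C * (u₀⁻¹ - Real.pi⁻¹) := by
      calc (∫ u in (-Real.pi)..(-u₀), Fs u) ≤ ∫ u in (-Real.pi)..(-u₀), C / u ^ 2 := by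
            apply intervalIntegral.integral_mono_on (by linarith) (hFsint _ _) (hint2 _ _ h0l)
            intro u hu
            refine htail u hu.1 (by linarith [hu.2]) ?_
            rw [abs_of_nonpos (by linarith [hu.2])]
            linarith [hu.2]
        _ = C * (u₀⁻¹ - Real.pi⁻¹) := by
            rw [hCunz _ _ h0l]
            have hne1 : -Real.pi ≠ (0:ℝ) := by linarith
            have hne2 : -u₀ ≠ (0:ℝ) := by linarith
            field_simp
            ring
    -- putting the pieces together
    have htot : (∫ θ in (0:ℝ)..(2*Real.pi), F θ) ≤ 2 * u₀ * M + 2 * (C * u₀⁻¹) := by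
      rw [hshift, hsplit]
      have hCπ : C * (u₀⁻¹ - Real.pi⁻¹) ≤ C * u₀⁻¹ := by
        have : (0:ℝ) ≤ C * Real.pi⁻¹ := by positivity
        nlinarith
      linarith
    -- final computation
    rw [hgoal]
    have hfinal : (1 / (2*Real.pi)) * (2 * u₀ * M + 2 * (C * u₀⁻¹)) ≤ (l / t) * (1 - r) := by
      have hE1 : 2 * u₀ * M = (1 - r ^ 2) * l / (s * t) := by
        rw [hu₀def, hMdef]; field_simp
      have hE2 : C * u₀⁻¹ = (1 - r ^ 2) * l / (2 * s * t) := by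
        rw [hu₀def, hCdef]; field_simp; ring
      rw [hE1, hE2]
      have hkey : 1 + r ≤ Real.pi * s := by nlinarith
      rw [← sub_nonneg]
      have hexp : (l / t) * (1 - r) - (1 / (2*Real.pi)) *
          ((1 - r ^ 2) * l / (s * t) + 2 * ((1 - r ^ 2) * l / (2 * s * t)))
          = (l * (1 - r)) / (Real.pi * s * t) * (Real.pi * s - (1 + r)) := by
        field_simp
        ring
      rw [hexp]
      apply mul_nonneg
      · exact div_nonneg (mul_nonneg hl0.le (by linarith))
          (mul_nonneg (mul_nonneg hπ.le hs0.le) ht0.le)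
      · linarith
    calc (1 / (2*Real.pi)) * (∫ θ in (0:ℝ)..(2*Real.pi), F θ)
        ≤ (1 / (2*Real.pi)) * (2 * u₀ * M + 2 * (C * u₀⁻¹)) :=
          mul_le_mul_of_nonneg_left htot (by positivity)
      _ ≤ (l / t) * (1 - r) := hfinal
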